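/- Let T and S be finite nonempty types, let G be a connected simple graph on S, let μ : T → ℝ satisfy μ t ≥ 0 for all t, and for each t : T let p t, q t and h t be pmfs on S with full support. Define d(u,v) = u * Real.log (u / v) − u + v for u, v > 0, and define the objective 𝓛 = ∑ t, μ t * ∑ x, h t x * ∑_{y adjacent to x in G} d( p t y / p t x , q t y / q t x ). Then 𝓛 ≥ 0, and 𝓛 = 0 if and only if p t = q t for every t with μ t > 0. -/

import Mathlib

lemma d_nonneg {u v : ℝ} (hu : 0 < u) (hv : 0 < v) :
    0 ≤ u * Real.log (u / v) - u + v := by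
  have h1 : Real.log (v / u) ≤ v / u - 1 := Real.log_le_sub_one_of_pos (by positivity)
  have h2 : Real.log (u / v) = - Real.log (v / u) := by
    rw [← Real.log_inv, inv_div]
  rw [h2]
  have h3 : u * Real.log (v / u) ≤ u * (v / u - 1) :=
    mul_le_mul_of_nonneg_left h1 hu.le
  have h4 : u * (v / u - 1) = v - u := by field_simp
  nlinarith

lemma d_eq_zero {u v : ℝ} (hu : 0 < u) (hv : 0 < v)
    (hd : u * Real.log (u / v) - u + v = 0) : u = v := by
  by_contra hne
  have hvu : v / u ≠ 1 := fun hh => hne ((div_eq_one_iff_eq hu.ne').mp hh).symm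
  have h1 : Real.log (v / u) < v / u - 1 :=
    Real.log_lt_sub_one_of_pos (by positivity) hvu
  have h2 : Real.log (u / v) = - Real.log (v / u) := by
    rw [← Real.log_inv, inv_div]
  have h3 : u * Real.log (v / u) < u * (v / u - 1) :=
    mul_lt_mul_of_pos_left h1 hu
  have h4 : u * (v / u - 1) = v - u := by field_simp
  rw [h2] at hd
  nlinarith

/-- The TCSM objective with generalized-KL Bregman divergence
`d(u,v) = u * log (u/v) - u + v` applied to concrete scores along a connected graph is
nonnegative, and it vanishes iff the model `q t` equals the target `p t` for every
`t` with positive weight `μ t`. -/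
theorem tcsm_objective_nonneg_and_eq_zero_iff
    {T S : Type*} [Fintype T] [Nonempty T] [Fintype S] [Nonempty S]
    (G : SimpleGraph S) [DecidableRel G.Adj] (hG : G.Connected)
    (μ : T → ℝ) (hμ : ∀ t, 0 ≤ μ t)
    (p q h : T → S → ℝ)
    (hp_pos : ∀ t x, 0 < p t x) (hp_sum : ∀ t, ∑ x, p t x = 1)
    (hq_pos : ∀ t x, 0 < q t x) (hq_sum : ∀ t, ∑ x, q t x = 1)
    (hh_pos : ∀ t x, 0 < h t x) (hh_sum : ∀ t, ∑ x, h t x = 1) :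
    0 ≤ (∑ t, μ t * ∑ x, h t x * ∑ y ∈ G.neighborFinset x,
          (p t y / p t x * Real.log ((p t y / p t x) / (q t y / q t x))
            - p t y / p t x + q t y / q t x)) ∧
    ((∑ t, μ t * ∑ x, h t x * ∑ y ∈ G.neighborFinset x,
          (p t y / p t x * Real.log ((p t y / p t x) / (q t y / q t x))
            - p t y / p t x + q t y / q t x)) = 0 ↔
      ∀ t, 0 < μ t → p t = q t) := by
  -- nonnegativity of each building block
  have hD : ∀ t x y, 0 ≤ p t y / p t x * Real.log ((p t y / p t x) / (q t y / q t x))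
      - p t y / p t x + q t y / q t x := fun t x y =>
    d_nonneg (div_pos (hp_pos t y) (hp_pos t x)) (div_pos (hq_pos t y) (hq_pos t x))
  have hInner : ∀ t x, 0 ≤ ∑ y ∈ G.neighborFinset x,
      (p t y / p t x * Real.log ((p t y / p t x) / (q t y / q t x))
        - p t y / p t x + q t y / q t x) := fun t x =>
    Finset.sum_nonneg fun y _ => hD t x y
  have hF : ∀ t, 0 ≤ ∑ x, h t x * ∑ y ∈ G.neighborFinset x,
      (p t y / p t x * Real.log ((p t y / p t x) / (q t y / q t x))
        - p t y / p t x + q t y / q t x) := fun t =>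
    Finset.sum_nonneg fun x _ => mul_nonneg (hh_pos t x).le (hInner t x)
  have hterm : ∀ t, 0 ≤ μ t * ∑ x, h t x * ∑ y ∈ G.neighborFinset x,
      (p t y / p t x * Real.log ((p t y / p t x) / (q t y / q t x))
        - p t y / p t x + q t y / q t x) := fun t => mul_nonneg (hμ t) (hF t)
  have htot : 0 ≤ ∑ t, μ t * ∑ x, h t x * ∑ y ∈ G.neighborFinset x,
      (p t y / p t x * Real.log ((p t y / p t x) / (q t y / q t x))
        - p t y / p t x + q t y / q t x) :=
    Finset.sum_nonneg fun t _ => hterm t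
  refine ⟨htot, ?_, ?_⟩
  · -- forward direction
    intro hzero t hμt
    have hall := (Finset.sum_eq_zero_iff_of_nonneg (fun t _ => hterm t)).mp hzero
    have hFt : ∑ x, h t x * ∑ y ∈ G.neighborFinset x,
        (p t y / p t x * Real.log ((p t y / p t x) / (q t y / q t x))
          - p t y / p t x + q t y / q t x) = 0 := by
      have := hall t (Finset.mem_univ t)
      rcases mul_eq_zero.mp this with h1 | h2
      · exact absurd h1 hμt.ne'
      · exact h2
    have hx0 := (Finset.sum_eq_zero_iff_of_nonneg
      (fun x _ => mul_nonneg (hh_pos t x).le (hInner t x))).mp hFt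
    -- ratios equal along each edge
    have key : ∀ x y, G.Adj x y → p t x / q t x = p t y / q t y := by
      intro x y hadj
      have hIx : ∑ y ∈ G.neighborFinset x,
          (p t y / p t x * Real.log ((p t y / p t x) / (q t y / q t x))
            - p t y / p t x + q t y / q t x) = 0 := by
        have := hx0 x (Finset.mem_univ x)
        rcases mul_eq_zero.mp this with h1 | h2
        · exact absurd h1 (hh_pos t x).ne'
        · exact h2
      have hd := (Finset.sum_eq_zero_iff_of_nonneg (fun y _ => hD t x y)).mp hIx y
        (by rwa [SimpleGraph.mem_neighborFinset])
      have heqr : p t y / p t x = q t y / q t x :=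
        d_eq_zero (div_pos (hp_pos t y) (hp_pos t x)) (div_pos (hq_pos t y) (hq_pos t x)) hd
      have h1 := (hp_pos t x).ne'
      have h2 := (hq_pos t x).ne'
      have h3 := (hq_pos t y).ne'
      field_simp at heqr ⊢
      linarith [heqr]
    -- constant ratio along walks
    have const : ∀ x y : S, p t x / q t x = p t y / q t y := by
      intro x y
      obtain ⟨w⟩ := hG.preconnected x y
      induction w with
      | nil => rfl
      | cons hadj w ih => exact (key _ _ hadj).trans ih
    obtain ⟨x₀⟩ := (inferInstance : Nonempty S)
    set c := p t x₀ / q t x₀ with hc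
    have hpc : ∀ x, p t x = c * q t x := by
      intro x
      have := (const x x₀)
      have hq := (hq_pos t x).ne'
      field_simp [hc] at this ⊢
      rw [this, hc]; ring
    have hc1 : c = 1 := by
      have hsum : ∑ x, p t x = c * ∑ x, q t x := by
        rw [Finset.mul_sum]
        exact Finset.sum_congr rfl fun x _ => hpc x
      rw [hp_sum t, hq_sum t, mul_one] at hsum
      linarith
    funext x
    rw [hpc x, hc1, one_mul]
  · -- backward direction
    intro heq
    apply Finset.sum_eq_zero
    intro t _
    rcases (hμ t).lt_or_eq with hμt | hμt
    · have hpq := heq t hμt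
      have : ∑ x, h t x * ∑ y ∈ G.neighborFinset x,
          (p t y / p t x * Real.log ((p t y / p t x) / (q t y / q t x))
            - p t y / p t x + q t y / q t x) = 0 := by
        apply Finset.sum_eq_zero
        intro x _
        have : ∑ y ∈ G.neighborFinset x,
            (p t y / p t x * Real.log ((p t y / p t x) / (q t y / q t x))
              - p t y / p t x + q t y / q t x) = 0 := by
          apply Finset.sum_eq_zero
          intro y _
          rw [hpq]
          have : (q t y / q t x) / (q t y / q t x) = 1 := by
            have := (hq_pos t x).ne'
            have := (hq_pos t y).ne'
            field_simp
          rw [this, Real.log_one, mul_zero]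
          ring
        rw [this, mul_zero]
      rw [this, mul_zero]
    · rw [← hμt, zero_mul]
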